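/- Suppose a coordinate update has the form Δx_i = Σ_{j∈N(i)} ((x_i - x_j)/‖x_i - x_j‖) · w_ij, where each scalar weight w_ij is E(3)-invariant in the coordinates. Then the updated coordinates x_i' := x_i + Δx_i are E(3)-equivariant: if all inputs are transformed by x ↦ R x + t (R orthogonal), then the updated coordinate transforms to R x_i' + t. -/
import Mathlib


open Matrix

/-- Matrix action on Euclidean space. -/
noncomputable def mulVecE {m n : ℕ} (A : Matrix (Fin m) (Fin n) ℝ)
    (x : EuclideanSpace ℝ (Fin n)) : EuclideanSpace ℝ (Fin m) :=
  (EuclideanSpace.equiv (Fin m) ℝ).symm (A.mulVec x)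

noncomputable def mulVecL {m n : ℕ} (A : Matrix (Fin m) (Fin n) ℝ) :
    EuclideanSpace ℝ (Fin n) →ₗ[ℝ] EuclideanSpace ℝ (Fin m) where
  toFun := mulVecE A
  map_add' x y := by
    ext k
    simp [mulVecE, Matrix.mulVec, dotProduct, mul_add, Finset.sum_add_distrib]
  map_smul' c x := by
    ext k
    simp [mulVecE, Matrix.mulVec, dotProduct, Finset.mul_sum, mul_left_comm]

lemma mulVecL_apply {m n : ℕ} (A : Matrix (Fin m) (Fin n) ℝ)
    (x : EuclideanSpace ℝ (Fin n)) : mulVecL A x = mulVecE A x := rfl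

lemma norm_mulVecE {n : ℕ} (R : Matrix (Fin n) (Fin n) ℝ) (hR : Rᵀ * R = 1)
    (x : EuclideanSpace ℝ (Fin n)) : ‖mulVecE R x‖ = ‖x‖ := by
  have hd : (R.mulVec x) ⬝ᵥ (R.mulVec x) = (x : Fin n → ℝ) ⬝ᵥ x := by
    rw [Matrix.dotProduct_mulVec, ← Matrix.transpose_transpose R,
      Matrix.vecMul_transpose, Matrix.transpose_transpose, Matrix.mulVec_mulVec, hR,
      Matrix.one_mulVec]
  have h : @inner ℝ _ _ (mulVecE R x) (mulVecE R x) = @inner ℝ _ _ x x := by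
    simp only [PiLp.inner_apply, RCLike.inner_apply, starRingEnd_apply, star_trivial]
    exact hd
  rw [norm_eq_sqrt_real_inner (mulVecE R x), norm_eq_sqrt_real_inner x, h]

theorem coordinate_update_equivariant {N : ℕ} {ι : Type*}
    (w : ι → (Fin N → EuclideanSpace ℝ (Fin 3)) → ℝ)
    (xs : Fin N → EuclideanSpace ℝ (Fin 3)) (i : Fin N) (Nbr : Finset ι)
    (nb : ι → Fin N) (hne : ∀ j ∈ Nbr, xs i ≠ xs (nb j))
    (R : Matrix (Fin 3) (Fin 3) ℝ) (hR : Rᵀ * R = 1) (t : EuclideanSpace ℝ (Fin 3))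
    (hw : ∀ j (ys : Fin N → EuclideanSpace ℝ (Fin 3)),
      w j (fun p => mulVecE R (ys p) + t) = w j ys) :
    ((mulVecE R (xs i) + t) +
        ∑ j ∈ Nbr, w j (fun p => mulVecE R (xs p) + t) •
          ((‖(mulVecE R (xs i) + t) - (mulVecE R (xs (nb j)) + t)‖)⁻¹ •
            ((mulVecE R (xs i) + t) - (mulVecE R (xs (nb j)) + t)))) =
      mulVecE R (xs i + ∑ j ∈ Nbr,
          w j xs • ((‖xs i - xs (nb j)‖)⁻¹ • (xs i - xs (nb j)))) + t := by
  have hsub : ∀ a b, mulVecE R a - mulVecE R b = mulVecE R (a - b) := by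
    intro a b
    rw [← mulVecL_apply, ← mulVecL_apply, ← mulVecL_apply, map_sub]
  have key : ∀ j, (mulVecE R (xs i) + t) - (mulVecE R (xs (nb j)) + t)
      = mulVecE R (xs i - xs (nb j)) := by
    intro j
    rw [← hsub]
    abel
  simp only [key, hw, norm_mulVecE R hR]
  rw [← mulVecL_apply R (xs i + _), map_add, map_sum]
  simp only [_root_.map_smul, mulVecL_apply]
  abel
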